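/- Collapse of exact maximizers to ordinary Kelly: Fix α ∈ (0,1). For each n ≥ 1 let W_n ∈ W̄ be any point attaining sup_{W ∈ W̄} Q_{n,α}(W), i.e. Q_{n,α}(W_n) = sup_{W ∈ W̄} Q_{n,α}(W). Then W_n → W^K as n → ∞, where W^K_i = p_i/q_i. -/

import Mathlib

open Finset Filter Topology
open scoped Classical

noncomputable section

/-- The closed Arrow–Debreu wealth simplex `{W ∈ [0,∞)^m : Σ q_i W_i = 1}`. -/
def closedSimplex {m : ℕ} (q : Fin m → ℝ) : Set (Fin m → ℝ) :=
  {W | (∀ i, 0 ≤ W i) ∧ ∑ i, q i * W i = 1}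

/-- The open Arrow–Debreu wealth simplex `{W ∈ (0,∞)^m : Σ q_i W_i = 1}`. -/
def openSimplex {m : ℕ} (q : Fin m → ℝ) : Set (Fin m → ℝ) :=
  {W | (∀ i, 0 < W i) ∧ ∑ i, q i * W i = 1}

/-- The finite set `C_n` of count vectors `k : Fin m → ℕ` with `Σ k_i = n`. -/
def countFinset (m n : ℕ) : Finset (Fin m → ℕ) :=
  (Fintype.piFinset fun _ : Fin m => Finset.range (n + 1)).filter fun k => ∑ i, k i = n

/-- The monomial `W^k := Π_i W_i^{k_i}` (with the convention `0^0 = 1`). -/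
def mono {m : ℕ} (W : Fin m → ℝ) (k : Fin m → ℕ) : ℝ := ∏ i, W i ^ k i

/-- The multinomial probability `π_k = (n!/(k_1!⋯k_m!))·Π p_i^{k_i}`. -/
def countProb {m : ℕ} (p : Fin m → ℝ) (k : Fin m → ℕ) : ℝ :=
  (Nat.multinomial Finset.univ k : ℝ) * ∏ i, p i ^ k i

/-- The upper α-quantile of terminal wealth
`Q_{n,α}(W) := sup{t ∈ [0,∞) : Σ_{k ∈ C_n : W^k ≥ t} π_k ≥ α}`. -/
def upperQuantile {m : ℕ} (p : Fin m → ℝ) (n : ℕ) (α : ℝ) (W : Fin m → ℝ) : ℝ :=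
  sSup {t : ℝ | 0 ≤ t ∧
    α ≤ ∑ k ∈ countFinset m n, if t ≤ mono W k then countProb p k else 0}

/-- The union of the count hyperplanes `H_{k,ℓ}`. -/
def hyperUnion (m n : ℕ) : Set (Fin m → ℝ) :=
  {u | ∃ k ∈ countFinset m n, ∃ l ∈ countFinset m n,
    k ≠ l ∧ ∑ i, ((k i : ℝ) - (l i : ℝ)) * u i = 0}

/-- A chamber is a connected component of the complement of the count arrangement. -/
def IsChamber (m n : ℕ) (Γ : Set (Fin m → ℝ)) : Prop :=
  ∃ u ∈ (hyperUnion m n)ᶜ, Γ = connectedComponentIn (hyperUnion m n)ᶜ u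

/-- `F_Γ := {W ∈ W⁺⁺ : log W ∈ Γ}`. -/
def chamberFace {m : ℕ} (q : Fin m → ℝ) (Γ : Set (Fin m → ℝ)) : Set (Fin m → ℝ) :=
  {W | W ∈ openSimplex q ∧ (fun i => Real.log (W i)) ∈ Γ}

/-- `k` is the quantile count vector `k_{α,Γ}` of the chamber `Γ`: the tail mass at `W^k`
is at least `α`, while the strict tail mass is below `α`, for every `W ∈ F_Γ`. -/
def IsQuantileVec {m : ℕ} (p q : Fin m → ℝ) (n : ℕ) (α : ℝ) (Γ : Set (Fin m → ℝ))
    (k : Fin m → ℕ) : Prop :=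
  k ∈ countFinset m n ∧
  ∀ W ∈ chamberFace q Γ,
    α ≤ (∑ l ∈ countFinset m n, if mono W k ≤ mono W l then countProb p l else 0) ∧
    (∑ l ∈ countFinset m n, if mono W k < mono W l then countProb p l else 0) < α

lemma countFinset_eq (m n : ℕ) : countFinset m n = Finset.piAntidiag Finset.univ n := by
  ext k
  simp only [countFinset, Finset.mem_filter, Fintype.mem_piFinset, Finset.mem_range,
    Nat.lt_succ_iff, Finset.mem_piAntidiag]
  constructor
  · rintro ⟨-, h⟩; exact ⟨h, fun i _ => Finset.mem_univ i⟩
  · rintro ⟨h, -⟩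
    refine ⟨fun i => ?_, h⟩
    exact h ▸ Finset.single_le_sum (fun j _ => Nat.zero_le _) (Finset.mem_univ i)

lemma sum_countProb_mul_mono {m n : ℕ} (p y : Fin m → ℝ) :
    ∑ k ∈ countFinset m n, countProb p k * mono y k = (∑ i, p i * y i) ^ n := by
  rw [Finset.sum_pow_eq_sum_piAntidiag, ← countFinset_eq]
  refine Finset.sum_congr rfl fun k _ => ?_
  simp only [countProb, mono, mul_pow, Finset.prod_mul_distrib]
  ring

lemma sum_countProb {m n : ℕ} (p : Fin m → ℝ) (hpsum : ∑ i, p i = 1) :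
    ∑ k ∈ countFinset m n, countProb p k = 1 := by
  have := sum_countProb_mul_mono (m := m) (n := n) p (fun _ => 1)
  simpa [mono, hpsum] using this

lemma countProb_nonneg {m : ℕ} {p : Fin m → ℝ} (hp : ∀ i, 0 ≤ p i) (k : Fin m → ℕ) :
    0 ≤ countProb p k :=
  mul_nonneg (Nat.cast_nonneg _) (Finset.prod_nonneg fun i _ => pow_nonneg (hp i) _)

lemma mono_nonneg {m : ℕ} {W : Fin m → ℝ} (hW : ∀ i, 0 ≤ W i) (k : Fin m → ℕ) :
    0 ≤ mono W k :=
  Finset.prod_nonneg fun i _ => pow_nonneg (hW i) _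

lemma mono_pos {m : ℕ} {W : Fin m → ℝ} (hW : ∀ i, 0 < W i) (k : Fin m → ℕ) :
    0 < mono W k :=
  Finset.prod_pos fun i _ => pow_pos (hW i) _

lemma mono_rpow {m : ℕ} {W : Fin m → ℝ} (hW : ∀ i, 0 ≤ W i) (s : ℝ) (k : Fin m → ℕ) : (mono W k) ^ s = mono (fun i => W i ^ s) k := by
  rw [mono, ← Real.finset_prod_rpow _ _ (fun i _ => pow_nonneg (hW i) _)]
  refine Finset.prod_congr rfl fun i _ => ?_
  rw [← Real.rpow_natCast (W i) (k i), ← Real.rpow_mul (hW i), mul_comm,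
    Real.rpow_mul (hW i), Real.rpow_natCast]

def QSet {m : ℕ} (p : Fin m → ℝ) (n : ℕ) (α : ℝ) (W : Fin m → ℝ) : Set ℝ :=
  {t : ℝ | 0 ≤ t ∧
    α ≤ ∑ k ∈ countFinset m n, if t ≤ mono W k then countProb p k else 0}

lemma zero_mem_QSet {m n : ℕ} {p : Fin m → ℝ} {α : ℝ} {W : Fin m → ℝ}
    (hpsum : ∑ i, p i = 1) (hα : α ≤ 1) (hW : ∀ i, 0 ≤ W i) :
    (0 : ℝ) ∈ QSet p n α W := by
  refine ⟨le_refl 0, ?_⟩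
  have : ∀ k ∈ countFinset m n, (if (0:ℝ) ≤ mono W k then countProb p k else 0) = countProb p k :=
    fun k _ => if_pos (mono_nonneg hW k)
  rw [Finset.sum_congr rfl this, sum_countProb p hpsum]
  exact hα

lemma markov_bound {m n : ℕ} {p : Fin m → ℝ} {α : ℝ} {W : Fin m → ℝ}
    (hp : ∀ i, 0 ≤ p i) (hW : ∀ i, 0 ≤ W i) {s : ℝ} (hs : 0 < s)
    {t : ℝ} (ht : t ∈ QSet p n α W) (ht0 : 0 < t) :
    α * t ^ s ≤ (∑ i, p i * W i ^ s) ^ n := by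
  have key : α * t ^ s ≤ ∑ k ∈ countFinset m n, countProb p k * (mono W k) ^ s := by
    calc α * t ^ s
        ≤ (∑ k ∈ countFinset m n, if t ≤ mono W k then countProb p k else 0) * t ^ s := by
          apply mul_le_mul_of_nonneg_right ht.2 (Real.rpow_nonneg ht0.le s)
      _ = ∑ k ∈ countFinset m n, (if t ≤ mono W k then countProb p k else 0) * t ^ s := by
          rw [Finset.sum_mul]
      _ ≤ ∑ k ∈ countFinset m n, countProb p k * (mono W k) ^ s := by
          refine Finset.sum_le_sum fun k _ => ?_
          by_cases h : t ≤ mono W k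
          · rw [if_pos h]
            exact mul_le_mul_of_nonneg_left
              (Real.rpow_le_rpow ht0.le h hs.le) (countProb_nonneg hp k)
          · rw [if_neg h, zero_mul]
            exact mul_nonneg (countProb_nonneg hp k)
              (Real.rpow_nonneg (mono_nonneg hW k) s)
  calc α * t ^ s ≤ ∑ k ∈ countFinset m n, countProb p k * (mono W k) ^ s := key
    _ = ∑ k ∈ countFinset m n, countProb p k * mono (fun i => W i ^ s) k := by
        exact Finset.sum_congr rfl fun k _ => by rw [mono_rpow hW s k]
    _ = (∑ i, p i * W i ^ s) ^ n := sum_countProb_mul_mono p _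

lemma exp_le_quadratic {y : ℝ} (hy : |y| ≤ 1) : Real.exp y ≤ 1 + y + y ^ 2 := by
  have hb := Real.exp_bound hy (by norm_num : 0 < 2)
  have h1 : ∑ i ∈ Finset.range 2, y ^ i / (Nat.factorial i : ℝ) = 1 + y := by
    simp [Finset.sum_range_succ, Nat.factorial]
  rw [h1] at hb
  norm_num [Nat.factorial] at hb
  have := abs_le.mp hb
  nlinarith [sq_nonneg y]

lemma reverse_markov {m n : ℕ} {p : Fin m → ℝ} {K : Fin m → ℝ}
    (hp : ∀ i, 0 ≤ p i) (hK : ∀ i, 0 < K i) {s : ℝ} (hs : 0 < s)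
    {t : ℝ} (ht0 : 0 < t) :
    ∑ k ∈ countFinset m n, (if ¬ t ≤ mono K k then countProb p k else 0)
      ≤ t ^ s * (∑ i, p i * K i ^ (-s)) ^ n := by
  have key : ∀ k ∈ countFinset m n,
      (if ¬ t ≤ mono K k then countProb p k else 0)
        ≤ countProb p k * (t ^ s * (mono K k) ^ (-s)) := by
    intro k _
    have hm : 0 < mono K k := mono_pos hK k
    have hms : 0 < (mono K k) ^ s := Real.rpow_pos_of_pos hm s
    have hns : 0 < (mono K k) ^ (-s) := Real.rpow_pos_of_pos hm (-s)
    by_cases h : t ≤ mono K k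
    · rw [if_neg (not_not_intro h)]
      exact mul_nonneg (countProb_nonneg hp k)
        (mul_nonneg (Real.rpow_nonneg ht0.le s) hns.le)
    · rw [if_pos h]
      push_neg at h
      have h1 : (mono K k) ^ s ≤ t ^ s := Real.rpow_le_rpow hm.le h.le hs.le
      have h2 : (1:ℝ) ≤ t ^ s * (mono K k) ^ (-s) := by
        rw [Real.rpow_neg hm.le, ← div_eq_mul_inv, le_div_iff₀ hms, one_mul]
        exact h1
      nth_rewrite 1 [← mul_one (countProb p k)]
      exact mul_le_mul_of_nonneg_left h2 (countProb_nonneg hp k)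
  calc ∑ k ∈ countFinset m n, (if ¬ t ≤ mono K k then countProb p k else 0)
      ≤ ∑ k ∈ countFinset m n, countProb p k * (t ^ s * (mono K k) ^ (-s)) :=
        Finset.sum_le_sum key
    _ = t ^ s * ∑ k ∈ countFinset m n, countProb p k * mono (fun i => K i ^ (-s)) k := by
        rw [Finset.mul_sum]
        refine Finset.sum_congr rfl fun k _ => ?_
        rw [← mono_rpow (fun i => (hK i).le) (-s) k]; ring
    _ = t ^ s * (∑ i, p i * K i ^ (-s)) ^ n := by rw [sum_countProb_mul_mono]

lemma tail_eventually {m : ℕ} (hm : 0 < m) {p K : Fin m → ℝ}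
    (hp : ∀ i, 0 < p i) (hpsum : ∑ i, p i = 1) (hK : ∀ i, 0 < K i)
    {δ β : ℝ} (hδ : 0 < δ) (hβ : 0 < β) :
    ∀ᶠ n : ℕ in Filter.atTop,
      1 - β ≤ ∑ k ∈ countFinset m n,
        (if Real.exp (n * ((∑ i, p i * Real.log (K i)) - δ)) ≤ mono K k
          then countProb p k else 0) := by
  classical
  set x : Fin m → ℝ := fun i => Real.log (K i) with hx
  set Λ : ℝ := ∑ i, p i * x i with hΛ
  set X : ℝ := ∑ i, p i * x i ^ 2 with hXdef
  have hX0 : 0 ≤ X := Finset.sum_nonneg fun i _ => mul_nonneg (hp i).le (sq_nonneg _)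
  have hne : (Finset.univ : Finset (Fin m)).Nonempty := ⟨⟨0, hm⟩, Finset.mem_univ _⟩
  set M : ℝ := Finset.univ.sup' hne fun i => |x i| with hM
  have hxM : ∀ i, |x i| ≤ M := fun i =>
    hM ▸ Finset.le_sup' (fun j => |x j|) (Finset.mem_univ i)
  have hM0 : 0 ≤ M := le_trans (abs_nonneg (x ⟨0, hm⟩)) (hxM ⟨0, hm⟩)
  set s : ℝ := min (δ / (2 * (X + 1))) (1 / (1 + M)) with hsdef
  have hs0 : 0 < s := lt_min (by positivity) (by positivity)
  have hs1 : ∀ i, |s * x i| ≤ 1 := by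
    intro i
    rw [abs_mul, abs_of_pos hs0]
    calc s * |x i| ≤ (1 / (1 + M)) * M :=
          mul_le_mul (min_le_right _ _) (hxM i) (abs_nonneg _) (by positivity)
      _ ≤ 1 := by rw [div_mul_eq_mul_div, one_mul, div_le_one (by linarith)]; linarith
  have hsX : s * X ≤ δ / 2 := by
    have h1 : s ≤ δ / (2 * (X + 1)) := min_le_left _ _
    have h2 : s * X ≤ (δ / (2 * (X + 1))) * X :=
      mul_le_mul_of_nonneg_right h1 hX0
    calc s * X ≤ (δ / (2 * (X + 1))) * X := h2
      _ ≤ δ / 2 := by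
          rw [div_mul_eq_mul_div, div_le_div_iff₀ (by positivity) (by positivity)]
          nlinarith
  have hG : ∑ i, p i * K i ^ (-s) ≤ Real.exp (-(s * Λ) + s ^ 2 * X) := by
    have hterm : ∀ i, K i ^ (-s) = Real.exp (-(s * x i)) := by
      intro i
      rw [Real.rpow_def_of_pos (hK i)]
      congr 1; simp only [hx]; ring
    have h1 : ∑ i, p i * K i ^ (-s) ≤ ∑ i, p i * (1 - s * x i + (s * x i) ^ 2) := by
      refine Finset.sum_le_sum fun i _ => ?_
      refine mul_le_mul_of_nonneg_left ?_ (hp i).le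
      rw [hterm i]
      have := exp_le_quadratic (y := -(s * x i)) (by rw [abs_neg]; exact hs1 i)
      calc Real.exp (-(s * x i)) ≤ 1 + -(s * x i) + (-(s * x i)) ^ 2 := this
        _ = 1 - s * x i + (s * x i) ^ 2 := by ring
    have h2 : ∑ i, p i * (1 - s * x i + (s * x i) ^ 2)
        = 1 - s * Λ + s ^ 2 * X := by
      have : ∀ i, p i * (1 - s * x i + (s * x i) ^ 2)
          = p i - s * (p i * x i) + s ^ 2 * (p i * x i ^ 2) := fun i => by ring
      simp_rw [this, Finset.sum_add_distrib, Finset.sum_sub_distrib,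
        ← Finset.mul_sum, hpsum]
      rw [hΛ, hXdef]
    have h3 : 1 - s * Λ + s ^ 2 * X ≤ Real.exp (-(s * Λ) + s ^ 2 * X) := by
      have := Real.add_one_le_exp (-(s * Λ) + s ^ 2 * X)
      linarith
    linarith
  have hGnn : (0:ℝ) ≤ ∑ i, p i * K i ^ (-s) :=
    Finset.sum_nonneg fun i _ => mul_nonneg (hp i).le (Real.rpow_nonneg (hK i).le _)
  -- complement bound
  have hcomp : ∀ n : ℕ,
      ∑ k ∈ countFinset m n, (if ¬ Real.exp (n * (Λ - δ)) ≤ mono K k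
        then countProb p k else 0) ≤ Real.exp (-(s * δ / 2)) ^ n := by
    intro n
    have hrm := reverse_markov (n := n) (fun i => (hp i).le) hK hs0
      (t := Real.exp (n * (Λ - δ))) (Real.exp_pos _)
    have hts : Real.exp (n * (Λ - δ)) ^ s = Real.exp (s * (n * (Λ - δ))) := by
      rw [Real.rpow_def_of_pos (Real.exp_pos _), Real.log_exp, mul_comm]
    have hGn : (∑ i, p i * K i ^ (-s)) ^ n ≤ Real.exp (n * (-(s * Λ) + s ^ 2 * X)) := by
      rw [Real.exp_nat_mul]
      exact pow_le_pow_left₀ hGnn hG n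
    calc ∑ k ∈ countFinset m n, (if ¬ Real.exp (n * (Λ - δ)) ≤ mono K k
          then countProb p k else 0)
        ≤ Real.exp (n * (Λ - δ)) ^ s * (∑ i, p i * K i ^ (-s)) ^ n := hrm
      _ ≤ Real.exp (s * (n * (Λ - δ))) * Real.exp (n * (-(s * Λ) + s ^ 2 * X)) := by
          rw [hts]
          exact mul_le_mul_of_nonneg_left hGn (Real.exp_pos _).le
      _ = Real.exp (n * (s * (s * X - δ))) := by
          rw [← Real.exp_add]; congr 1; ring
      _ ≤ Real.exp (-(s * δ / 2)) ^ n := by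
          rw [← Real.exp_nat_mul]
          apply Real.exp_le_exp.mpr
          have hbound : s * (s * X - δ) ≤ -(s * δ / 2) := by nlinarith
          have hn0 : (0:ℝ) ≤ (n:ℝ) := Nat.cast_nonneg n
          nlinarith
  -- decay
  have hr1 : Real.exp (-(s * δ / 2)) < 1 := by
    rw [Real.exp_lt_one_iff]; nlinarith
  have hdecay : Filter.Tendsto (fun n : ℕ => Real.exp (-(s * δ / 2)) ^ n)
      Filter.atTop (nhds 0) :=
    tendsto_pow_atTop_nhds_zero_of_lt_one (Real.exp_pos _).le hr1
  have hev : ∀ᶠ n : ℕ in Filter.atTop, Real.exp (-(s * δ / 2)) ^ n < β :=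
    hdecay.eventually (gt_mem_nhds hβ)
  filter_upwards [hev] with n hn
  have hsplit : (∑ k ∈ countFinset m n, (if Real.exp (n * (Λ - δ)) ≤ mono K k
        then countProb p k else 0))
      + (∑ k ∈ countFinset m n, (if ¬ Real.exp (n * (Λ - δ)) ≤ mono K k
        then countProb p k else 0)) = 1 := by
    rw [← Finset.sum_add_distrib]
    rw [show (1:ℝ) = ∑ k ∈ countFinset m n, countProb p k from
      (sum_countProb p hpsum).symm]
    refine Finset.sum_congr rfl fun k _ => ?_
    by_cases h : Real.exp (n * (Λ - δ)) ≤ mono K k <;> simp [h]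
  have := hcomp n
  linarith

lemma gibbs_sep {m : ℕ} (hm : 0 < m) {p q W : Fin m → ℝ}
    (hp : ∀ i, 0 < p i) (hpsum : ∑ i, p i = 1) (hq : ∀ i, 0 < q i)
    (hWmem : W ∈ closedSimplex q) (hne : W ≠ fun i => p i / q i) :
    ∃ s : ℝ, 0 < s ∧ s ≤ 1 ∧
      ∑ i, p i * W i ^ s < Real.exp (s * ∑ i, p i * Real.log (p i / q i)) := by
  classical
  obtain ⟨hW0, hWsum⟩ := hWmem
  set Λ : ℝ := ∑ i, p i * Real.log (p i / q i) with hΛdef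
  by_cases hpos : ∀ i, 0 < W i
  · -- interior case: strict Gibbs
    set x : Fin m → ℝ := fun i => Real.log (W i) with hxdef
    set μ : ℝ := ∑ i, p i * x i with hμdef
    have hμΛ : μ < Λ := by
      set r : Fin m → ℝ := fun i => W i * q i / p i with hrdef
      have hr0 : ∀ i, 0 < r i := fun i => by
        have := hpos i; have := hq i; have := hp i; positivity
      have hsumr : ∑ i, p i * r i = 1 := by
        rw [← hWsum]
        refine Finset.sum_congr rfl fun i _ => ?_
        simp only [hrdef]
        field_simp [(hp i).ne']
      obtain ⟨i0, hi0⟩ := Function.ne_iff.mp hne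
      have hr1 : r i0 ≠ 1 := by
        intro h
        apply hi0
        have hq0 := (hq i0).ne'
        simp only [hrdef] at h
        field_simp [(hp i0).ne'] at h
        rw [eq_div_iff hq0]
        linarith
      have hlogW : ∀ i, x i = Real.log (r i) + Real.log (p i / q i) := by
        intro i
        simp only [hxdef]
        have : W i = r i * (p i / q i) := by
          simp only [hrdef]
          field_simp [(hp i).ne', (hq i).ne']
        rw [this, Real.log_mul (hr0 i).ne' (div_pos (hp i) (hq i)).ne']
      have hsplit : μ = (∑ i, p i * Real.log (r i)) + Λ := by
        rw [hμdef, hΛdef, ← Finset.sum_add_distrib]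
        refine Finset.sum_congr rfl fun i _ => ?_
        rw [hlogW i]; ring
      have hjens : ∑ i, p i * Real.log (r i) < 0 := by
        have hlt : ∑ i, p i * Real.log (r i) < ∑ i, p i * (r i - 1) := by
          refine Finset.sum_lt_sum (fun i _ => ?_) ⟨i0, Finset.mem_univ i0, ?_⟩
          · exact mul_le_mul_of_nonneg_left
              (Real.log_le_sub_one_of_pos (hr0 i)) (hp i).le
          · exact mul_lt_mul_of_pos_left
              (Real.log_lt_sub_one_of_pos (hr0 i0) hr1) (hp i0)
        have : ∑ i, p i * (r i - 1) = 0 := by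
          have : ∀ i, p i * (r i - 1) = p i * r i - p i := fun i => by ring
          simp_rw [this, Finset.sum_sub_distrib, hsumr, hpsum, sub_self]
        linarith
      linarith [hsplit, hjens]
    -- choose s
    set X : ℝ := ∑ i, p i * x i ^ 2 with hXdef
    have hX0 : 0 ≤ X := Finset.sum_nonneg fun i _ => mul_nonneg (hp i).le (sq_nonneg _)
    have hneU : (Finset.univ : Finset (Fin m)).Nonempty := ⟨⟨0, hm⟩, Finset.mem_univ _⟩
    set M : ℝ := Finset.univ.sup' hneU fun i => |x i| with hMdef
    have hxM : ∀ i, |x i| ≤ M := fun i =>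
      hMdef ▸ Finset.le_sup' (fun j => |x j|) (Finset.mem_univ i)
    have hM0 : 0 ≤ M := le_trans (abs_nonneg (x ⟨0, hm⟩)) (hxM ⟨0, hm⟩)
    set s : ℝ := min (min ((Λ - μ) / (2 * (X + 1))) (1 / (1 + M))) 1 with hsdef
    have hs0 : 0 < s := by
      refine lt_min (lt_min ?_ ?_) one_pos
      · have : 0 < Λ - μ := by linarith
        positivity
      · positivity
    have hs1 : s ≤ 1 := min_le_right _ _
    have hsxb : ∀ i, |s * x i| ≤ 1 := by
      intro i
      rw [abs_mul, abs_of_pos hs0]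
      calc s * |x i| ≤ (1 / (1 + M)) * M :=
            mul_le_mul (le_trans (min_le_left _ _) (min_le_right _ _)) (hxM i)
              (abs_nonneg _) (by positivity)
        _ ≤ 1 := by rw [div_mul_eq_mul_div, one_mul, div_le_one (by linarith)]; linarith
    have hsX : s * X < Λ - μ := by
      have h1 : s ≤ (Λ - μ) / (2 * (X + 1)) := le_trans (min_le_left _ _) (min_le_left _ _)
      have h2 : s * X ≤ ((Λ - μ) / (2 * (X + 1))) * X :=
        mul_le_mul_of_nonneg_right h1 hX0
      have h3 : ((Λ - μ) / (2 * (X + 1))) * X < Λ - μ := by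
        rw [div_mul_eq_mul_div, div_lt_iff₀ (by positivity)]
        nlinarith
      linarith
    refine ⟨s, hs0, hs1, ?_⟩
    have hub : ∑ i, p i * W i ^ s ≤ 1 + s * μ + s ^ 2 * X := by
      have h1 : ∀ i, W i ^ s = Real.exp (s * x i) := by
        intro i
        rw [Real.rpow_def_of_pos (hpos i), hxdef, mul_comm]
      have h2 : ∑ i, p i * W i ^ s ≤ ∑ i, p i * (1 + s * x i + (s * x i) ^ 2) := by
        refine Finset.sum_le_sum fun i _ => ?_
        refine mul_le_mul_of_nonneg_left ?_ (hp i).le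
        rw [h1 i]
        exact exp_le_quadratic (hsxb i)
      have h3 : ∑ i, p i * (1 + s * x i + (s * x i) ^ 2) = 1 + s * μ + s ^ 2 * X := by
        have : ∀ i, p i * (1 + s * x i + (s * x i) ^ 2)
            = p i + s * (p i * x i) + s ^ 2 * (p i * x i ^ 2) := fun i => by ring
        simp_rw [this, Finset.sum_add_distrib, ← Finset.mul_sum, hpsum]
        rw [hμdef, hXdef]
      linarith
    have hlb : 1 + s * Λ ≤ Real.exp (s * Λ) := by
      have := Real.add_one_le_exp (s * Λ)
      linarith
    have : s * μ + s ^ 2 * X < s * Λ := by nlinarith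
    linarith
  · -- boundary case
    push_neg at hpos
    obtain ⟨j, hj⟩ := hpos
    have hWj : W j = 0 := le_antisymm hj (hW0 j)
    set T : Finset (Fin m) := Finset.univ.filter fun i => W i ≠ 0 with hTdef
    have hjT : j ∉ T := by simp [hTdef, hWj]
    set L : ℝ := ∑ i ∈ T, p i with hLdef
    have hL1 : L < 1 := by
      rw [hLdef, ← hpsum]
      refine Finset.sum_lt_sum_of_subset (Finset.subset_univ T) (Finset.mem_univ j) hjT
        (hp j) (fun i _ _ => (hp i).le)
    -- tendsto of g
    have hgt : Filter.Tendsto (fun s : ℝ => ∑ i ∈ T, p i * W i ^ s) (nhds 0) (nhds L) := by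
      rw [hLdef]
      have : Filter.Tendsto (fun s : ℝ => ∑ i ∈ T, p i * W i ^ s) (nhds 0)
          (nhds (∑ i ∈ T, p i * W i ^ (0:ℝ))) := by
        refine tendsto_finset_sum _ fun i hi => ?_
        have hWi : 0 < W i := by
          rcases lt_or_eq_of_le (hW0 i) with h | h
          · exact h
          · exact absurd h.symm (by simpa [hTdef] using hi)
        exact (Filter.Tendsto.const_mul _
          (Real.continuousAt_const_rpow hWi.ne' |>.tendsto))
      simpa [Real.rpow_zero] using this
    have hexpt : Filter.Tendsto (fun s : ℝ => Real.exp (s * Λ)) (nhds 0) (nhds 1) := by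
      have : Filter.Tendsto (fun s : ℝ => s * Λ) (nhds 0) (nhds 0) := by
        simpa using (tendsto_id (α := ℝ) (x := nhds 0)).mul_const Λ
      have h := (Real.continuous_exp.tendsto 0).comp this
      rw [Real.exp_zero] at h
      exact h
    have hev : ∀ᶠ s : ℝ in nhdsWithin 0 (Set.Ioi 0),
        (∑ i ∈ T, p i * W i ^ s) < Real.exp (s * Λ) :=
      ((hgt.mono_left nhdsWithin_le_nhds).eventually_lt
        (hexpt.mono_left nhdsWithin_le_nhds) hL1)
    have heq : ∀ᶠ s : ℝ in nhdsWithin 0 (Set.Ioi 0),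
        ∑ i, p i * W i ^ s = ∑ i ∈ T, p i * W i ^ s := by
      filter_upwards [self_mem_nhdsWithin] with s hs
      rw [← Finset.sum_filter_add_sum_filter_not Finset.univ (fun i => W i ≠ 0)]
      have : ∑ i ∈ Finset.univ.filter (fun i => ¬ W i ≠ 0), p i * W i ^ s = 0 := by
        refine Finset.sum_eq_zero fun i hi => ?_
        simp only [Finset.mem_filter, not_not] at hi
        rw [hi.2, Real.zero_rpow (ne_of_gt hs), mul_zero]
      rw [this, add_zero]
    have hlt1 : ∀ᶠ s : ℝ in nhdsWithin 0 (Set.Ioi 0), s < 1 := by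
      refine Filter.Eventually.filter_mono nhdsWithin_le_nhds ?_
      exact (tendsto_id (x := nhds (0:ℝ))).eventually_lt_const one_pos
    have hpos' : ∀ᶠ s : ℝ in nhdsWithin 0 (Set.Ioi 0), s ∈ Set.Ioi (0:ℝ) :=
      self_mem_nhdsWithin
    obtain ⟨s, ⟨⟨h1, h2⟩, h3⟩, h4⟩ := (((hev.and heq).and hlt1).and hpos').exists
    exact ⟨s, h4, h3.le, by rw [h2]; exact h1⟩

lemma QSet_subset_Iic {m n : ℕ} {p q : Fin m → ℝ} {α : ℝ} {W : Fin m → ℝ}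
    (hp : ∀ i, 0 < p i) (hα : 0 < α) (hq : ∀ i, 0 < q i)
    (hWmem : W ∈ closedSimplex q) {C : ℝ} (hC : 0 < C) (hCb : ∀ i, p i ≤ C * q i) :
    QSet p n α W ⊆ Set.Iic (α⁻¹ * C ^ n) := by
  intro t ht
  rcases eq_or_lt_of_le ht.1 with h | h
  · have : (0:ℝ) ≤ α⁻¹ * C ^ n := by positivity
    simpa [← h] using this
  · have hmk := markov_bound (n := n) (fun i => (hp i).le) hWmem.1 one_pos ht h
    rw [Real.rpow_one] at hmk
    have hsum : ∑ i, p i * W i ^ (1:ℝ) ≤ C := by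
      have h1 : ∀ i, p i * W i ^ (1:ℝ) = p i * W i := fun i => by rw [Real.rpow_one]
      simp_rw [h1]
      calc ∑ i, p i * W i ≤ ∑ i, C * (q i * W i) := by
            refine Finset.sum_le_sum fun i _ => ?_
            rw [← mul_assoc]
            exact mul_le_mul_of_nonneg_right (hCb i) (hWmem.1 i)
        _ = C := by rw [← Finset.mul_sum, hWmem.2, mul_one]
    have hsum0 : (0:ℝ) ≤ ∑ i, p i * W i ^ (1:ℝ) :=
      Finset.sum_nonneg fun i _ => mul_nonneg (hp i).le (Real.rpow_nonneg (hWmem.1 i) _)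
    have hfin : α * t ≤ C ^ n := hmk.trans (pow_le_pow_left₀ hsum0 hsum n)
    rw [Set.mem_Iic, ← inv_mul_cancel_left₀ hα.ne' t]
    exact mul_le_mul_of_nonneg_left hfin (inv_nonneg.mpr hα.le)

lemma upperQuantile_eq {m : ℕ} (p : Fin m → ℝ) (n : ℕ) (α : ℝ) (W : Fin m → ℝ) :
    upperQuantile p n α W = sSup (QSet p n α W) := rfl


set_option maxHeartbeats 1000000 in
/-- **Collapse of exact maximizers to ordinary Kelly.** If for each `n ≥ 1` the point
`W_n ∈ W̄` attains `sup_{W ∈ W̄} Q_{n,α}(W)`, then `W_n → W^K` where `W^K_i = p_i/q_i`. -/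
theorem maximizers_collapse_to_kelly (m : ℕ) (hm : 2 ≤ m)
    (p q : Fin m → ℝ) (hp : ∀ i, 0 < p i ∧ p i < 1) (hpsum : ∑ i, p i = 1)
    (hq : ∀ i, 0 < q i) (α : ℝ) (hα : 0 < α ∧ α < 1)
    (Wseq : ℕ → (Fin m → ℝ))
    (hW : ∀ n : ℕ, 1 ≤ n → Wseq n ∈ closedSimplex q ∧
      upperQuantile p n α (Wseq n) = sSup (upperQuantile p n α '' closedSimplex q)) :
    Filter.Tendsto Wseq Filter.atTop (nhds (fun i => p i / q i)) := by
  classical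
  obtain ⟨hα0, hα1⟩ := hα
  have hp' : ∀ i, 0 < p i := fun i => (hp i).1
  have hm0 : 0 < m := lt_of_lt_of_le two_pos hm
  set K : Fin m → ℝ := fun i => p i / q i with hKdef
  have hK0 : ∀ i, 0 < K i := fun i => div_pos (hp' i) (hq i)
  have hKmem : K ∈ closedSimplex q := by
    refine ⟨fun i => (hK0 i).le, ?_⟩
    rw [show ∑ i, q i * K i = ∑ i, p i from
      Finset.sum_congr rfl fun i _ => by
        rw [hKdef, mul_comm, div_mul_cancel₀ _ (hq i).ne']]
    exact hpsum
  set Λ : ℝ := ∑ i, p i * Real.log (K i) with hΛdef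
  -- uniform bound constant
  have hneU : (Finset.univ : Finset (Fin m)).Nonempty := ⟨⟨0, hm0⟩, Finset.mem_univ _⟩
  set C : ℝ := Finset.univ.sup' hneU (fun i => p i / q i) with hCdef
  have hCb' : ∀ i, p i / q i ≤ C := fun i =>
    hCdef ▸ Finset.le_sup' (fun j => p j / q j) (Finset.mem_univ i)
  have hC0 : 0 < C := lt_of_lt_of_le (hK0 ⟨0, hm0⟩) (hCb' ⟨0, hm0⟩)
  have hCb : ∀ i, p i ≤ C * q i := fun i => by
    have := (div_le_iff₀ (hq i)).mp (hCb' i)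
    linarith
  -- bddAbove facts
  have hbdd : ∀ (n : ℕ) (V : Fin m → ℝ), V ∈ closedSimplex q →
      QSet p n α V ⊆ Set.Iic (α⁻¹ * C ^ n) := fun n V hV =>
    QSet_subset_Iic hp' hα0 hq hV hC0 hCb
  have hQSetbdd : ∀ (n : ℕ) (V : Fin m → ℝ), V ∈ closedSimplex q →
      BddAbove (QSet p n α V) := fun n V hV => ⟨α⁻¹ * C ^ n, fun t ht => hbdd n V hV ht⟩
  have hQSetne : ∀ (n : ℕ) (V : Fin m → ℝ), V ∈ closedSimplex q →
      (0:ℝ) ∈ QSet p n α V := fun n V hV => zero_mem_QSet hpsum hα1.le hV.1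
  have hQle : ∀ (n : ℕ) (V : Fin m → ℝ), V ∈ closedSimplex q →
      upperQuantile p n α V ≤ α⁻¹ * C ^ n := fun n V hV => by
    rw [upperQuantile_eq]
    exact csSup_le ⟨0, hQSetne n V hV⟩ (fun t ht => hbdd n V hV ht)
  have himgbdd : ∀ n : ℕ, BddAbove (upperQuantile p n α '' closedSimplex q) := fun n =>
    ⟨α⁻¹ * C ^ n, by rintro _ ⟨V, hVm, rfl⟩; exact hQle n V hVm⟩
  have hQK_le : ∀ n : ℕ, 1 ≤ n →
      upperQuantile p n α K ≤ upperQuantile p n α (Wseq n) := fun n hn => by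
    rw [(hW n hn).2]
    exact le_csSup (himgbdd n) ⟨K, hKmem, rfl⟩
  -- lower bound on the quantile at Kelly
  have hlow : ∀ δ : ℝ, 0 < δ → ∀ᶠ n : ℕ in Filter.atTop,
      Real.exp (n * (Λ - δ)) ≤ upperQuantile p n α K := by
    intro δ hδ
    filter_upwards [tail_eventually hm0 hp' hpsum hK0 hδ (β := 1 - α) (by linarith)]
      with n hn
    rw [upperQuantile_eq]
    refine le_csSup (hQSetbdd n K hKmem) ⟨(Real.exp_pos _).le, ?_⟩
    rw [← hΛdef] at hn
    linarith
  -- contradiction setup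
  by_contra hcon
  rw [Metric.tendsto_atTop] at hcon
  push_neg at hcon
  obtain ⟨ε, hε, hcon⟩ := hcon
  have hfreq : ∃ᶠ n in Filter.atTop, 1 ≤ n ∧ ε ≤ dist (Wseq n) K := by
    rw [Filter.frequently_atTop]
    intro N
    obtain ⟨n, hn1, hn2⟩ := hcon (max N 1)
    exact ⟨n, le_trans (le_max_left N 1) hn1, le_trans (le_max_right N 1) hn1, hn2⟩
  obtain ⟨φ, hφmono, hφ⟩ := Filter.extraction_of_frequently_atTop hfreq
  -- compactness of the simplex
  have hclosed : IsClosed (closedSimplex q) := by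
    have h1 : IsClosed {V : Fin m → ℝ | ∀ i, 0 ≤ V i} := by
      have : {V : Fin m → ℝ | ∀ i, 0 ≤ V i} = ⋂ i, {V : Fin m → ℝ | 0 ≤ V i} := by
        ext V; simp
      rw [this]
      exact isClosed_iInter fun i => isClosed_le continuous_const (continuous_apply i)
    have h2 : IsClosed {V : Fin m → ℝ | ∑ i, q i * V i = 1} :=
      isClosed_eq (by continuity) continuous_const
    have : closedSimplex q
        = {V : Fin m → ℝ | ∀ i, 0 ≤ V i} ∩ {V : Fin m → ℝ | ∑ i, q i * V i = 1} := rfl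
    rw [this]
    exact h1.inter h2
  have hsub : closedSimplex q ⊆ Set.pi Set.univ (fun i => Set.Icc (0:ℝ) (1 / q i)) := by
    rintro V ⟨hV0, hVsum⟩ i _
    refine ⟨hV0 i, ?_⟩
    have h1 : q i * V i ≤ 1 := by
      rw [← hVsum]
      exact Finset.single_le_sum
        (f := fun j => q j * V j)
        (fun j _ => mul_nonneg (hq j).le (hV0 j)) (Finset.mem_univ i)
    rw [le_div_iff₀ (hq i)]
    linarith [h1]
  have hcomp : IsCompact (closedSimplex q) :=
    (isCompact_univ_pi fun i => isCompact_Icc).of_isClosed_subset hclosed hsub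
  have hseqmem : ∀ j, Wseq (φ j) ∈ closedSimplex q := fun j => (hW _ (hφ j).1).1
  obtain ⟨Wstar, hWstar_mem, ψ, hψmono, hψtend⟩ := hcomp.tendsto_subseq hseqmem
  set σ : ℕ → ℕ := φ ∘ ψ with hσdef
  have hσ1 : ∀ j, 1 ≤ σ j := fun j => (hφ (ψ j)).1
  have hσtend_at : Filter.Tendsto σ Filter.atTop Filter.atTop :=
    (hφmono.comp hψmono).tendsto_atTop
  have hσW : Filter.Tendsto (fun j => Wseq (σ j)) Filter.atTop (nhds Wstar) := hψtend
  have hWstar_ne : Wstar ≠ K := by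
    have hd : Filter.Tendsto (fun j => dist (Wseq (σ j)) K) Filter.atTop
        (nhds (dist Wstar K)) := hσW.dist tendsto_const_nhds
    have hd2 : ε ≤ dist Wstar K :=
      ge_of_tendsto hd (Filter.Eventually.of_forall fun j => (hφ (ψ j)).2)
    intro h
    rw [h, dist_self] at hd2
    linarith
  -- main claim
  have hclaim : ∀ s : ℝ, 0 < s → s ≤ 1 →
      Real.exp (s * Λ) ≤ ∑ i, p i * Wstar i ^ s := by
    intro s hs0 hs1
    by_contra hlt
    push_neg at hlt
    set G : ℝ := ∑ i, p i * Wstar i ^ s with hGdef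
    have hGnn : 0 ≤ G :=
      Finset.sum_nonneg fun i _ => mul_nonneg (hp' i).le (Real.rpow_nonneg (hWstar_mem.1 i) _)
    set c : ℝ := (G + Real.exp (s * Λ)) / 2 with hcdef
    have hc1 : G < c := by rw [hcdef]; linarith
    have hc2 : c < Real.exp (s * Λ) := by rw [hcdef]; linarith
    have hc0 : 0 < c := by
      rw [hcdef]; have := Real.exp_pos (s * Λ); linarith
    have hcont : Filter.Tendsto (fun j => ∑ i, p i * (Wseq (σ j)) i ^ s)
        Filter.atTop (nhds G) := by
      rw [hGdef]
      refine tendsto_finset_sum _ fun i _ => Filter.Tendsto.const_mul _ ?_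
      have hcoord : Filter.Tendsto (fun j => Wseq (σ j) i) Filter.atTop (nhds (Wstar i)) :=
        ((continuous_apply i).continuousAt.tendsto).comp hσW
      exact ((Real.continuousAt_rpow_const _ _ (Or.inr hs0.le)).tendsto).comp hcoord
    have hev1 : ∀ᶠ j in Filter.atTop, ∑ i, p i * (Wseq (σ j)) i ^ s < c :=
      hcont.eventually_lt_const hc1
    -- choose δ
    set δ : ℝ := (s * Λ - Real.log c) / (2 * s) with hδdef
    have hlogc : Real.log c < s * Λ := by
      have := Real.exp_log hc0
      nlinarith [Real.log_lt_log hc0 hc2, Real.log_exp (s * Λ)]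
    have hδ0 : 0 < δ := by
      rw [hδdef]; exact div_pos (by linarith) (by positivity)
    have hcexp : c < Real.exp (s * (Λ - δ)) := by
      have h1 : Real.log c < s * (Λ - δ) := by
        have hsd : s * δ = (s * Λ - Real.log c) / 2 := by
          rw [hδdef]; field_simp
        have hms : s * (Λ - δ) = s * Λ - s * δ := by ring
        rw [hms]
        linarith
      calc c = Real.exp (Real.log c) := (Real.exp_log hc0).symm
        _ < Real.exp (s * (Λ - δ)) := Real.exp_lt_exp.mpr h1
    set ρ : ℝ := c / Real.exp (s * (Λ - δ)) with hρdef
    have hρ0 : 0 ≤ ρ := by positivity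
    have hρ1 : ρ < 1 := by
      rw [hρdef, div_lt_one (Real.exp_pos _)]
      exact hcexp
    have hρev : ∀ᶠ n : ℕ in Filter.atTop, ρ ^ n < α / 2 :=
      (tendsto_pow_atTop_nhds_zero_of_lt_one hρ0 hρ1).eventually_lt_const (by linarith)
    obtain ⟨j, ⟨hj1, hj2⟩, hj3⟩ :=
      ((hev1.and (hσtend_at.eventually (hlow δ hδ0))).and
        (hσtend_at.eventually hρev)).exists
    set n : ℕ := σ j with hndef
    have hW'mem := (hW n (hσ1 j)).1
    have hQn : Real.exp (n * (Λ - δ)) ≤ upperQuantile p n α (Wseq n) :=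
      le_trans hj2 (hQK_le n (hσ1 j))
    rw [upperQuantile_eq] at hQn
    have hhalf : Real.exp (n * (Λ - δ)) / 2 < sSup (QSet p n α (Wseq n)) :=
      lt_of_lt_of_le (half_lt_self (Real.exp_pos _)) hQn
    obtain ⟨t, htS, htgt⟩ := exists_lt_of_lt_csSup ⟨0, hQSetne n _ hW'mem⟩ hhalf
    have ht0 : 0 < t := lt_trans (by positivity) htgt
    have hmk : α * t ^ s ≤ (∑ i, p i * (Wseq n) i ^ s) ^ n :=
      markov_bound (fun i => (hp' i).le) hW'mem.1 hs0 htS ht0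
    have hsum0 : (0:ℝ) ≤ ∑ i, p i * (Wseq n) i ^ s :=
      Finset.sum_nonneg fun i _ => mul_nonneg (hp' i).le (Real.rpow_nonneg (hW'mem.1 i) _)
    have hcn : (∑ i, p i * (Wseq n) i ^ s) ^ n ≤ c ^ n :=
      pow_le_pow_left₀ hsum0 hj1.le n
    have hts : (Real.exp (n * (Λ - δ)) / 2) ^ s ≤ t ^ s :=
      Real.rpow_le_rpow (by positivity) htgt.le hs0.le
    have hEeq : Real.exp ((n:ℝ) * (Λ - δ)) ^ s = Real.exp (s * (Λ - δ)) ^ n := by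
      rw [Real.rpow_def_of_pos (Real.exp_pos _), Real.log_exp, ← Real.exp_nat_mul]
      congr 1; ring
    have hhalfpow : (1/2 : ℝ) ≤ (1/2 : ℝ) ^ s := by
      have := Real.rpow_le_rpow_of_exponent_ge (by norm_num : (0:ℝ) < 1/2)
        (by norm_num : (1/2:ℝ) ≤ 1) hs1
      rwa [Real.rpow_one] at this
    have hsplit : (Real.exp ((n:ℝ) * (Λ - δ)) / 2) ^ s
        = Real.exp ((n:ℝ) * (Λ - δ)) ^ s * (1/2 : ℝ) ^ s := by
      rw [Real.div_rpow (Real.exp_pos _).le (by norm_num : (0:ℝ) ≤ 2),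
        Real.div_rpow (by norm_num : (0:ℝ) ≤ 1) (by norm_num : (0:ℝ) ≤ 2),
        Real.one_rpow, div_eq_mul_inv, div_eq_mul_inv, one_mul]
    have hkey : α * (Real.exp (s * (Λ - δ)) ^ n * (1/2)) ≤ c ^ n := by
      calc α * (Real.exp (s * (Λ - δ)) ^ n * (1/2))
          ≤ α * ((Real.exp ((n:ℝ) * (Λ - δ)) / 2) ^ s) := by
            rw [hsplit, hEeq]
            exact mul_le_mul_of_nonneg_left
              (mul_le_mul_of_nonneg_left hhalfpow (pow_nonneg (Real.exp_pos _).le n)) hα0.le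
        _ ≤ α * t ^ s := mul_le_mul_of_nonneg_left hts hα0.le
        _ ≤ c ^ n := hmk.trans hcn
    have hEn : (0:ℝ) < Real.exp (s * (Λ - δ)) ^ n := pow_pos (Real.exp_pos _) n
    have hfin : α / 2 ≤ ρ ^ n := by
      rw [hρdef, div_pow, le_div_iff₀ hEn]
      nlinarith [hkey]
    linarith [hj3]
  obtain ⟨s, hs0, hs1, hslt⟩ := gibbs_sep hm0 hp' hpsum hq hWstar_mem hWstar_ne
  refine absurd (hclaim s hs0 hs1) (not_le.mpr ?_)
  have : ∑ i, p i * Real.log (p i / q i) = Λ := by rw [hΛdef]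
  rw [this] at hslt
  exact hslt
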